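/- arXiv:1112.0792 — 2 statements merged into one kernel-verified Lean document; each statement's English description precedes it below -/
import Mathlib

section
/- Let f be a symmetric formal power series in t₁,…,t_d over K and let S_{(1)}(t₁,…,t_d) = t₁+⋯+t_d. Then M'(f·S_{(1)}; v₁,…,v_d) = v₁·M'(f; v₁,…,v_d) + Σ_{i=1}^{d−1} (v_{i+1}/v_i)·(M'(f; v₁,…,v_d) − M'(f; v₁,…,v_{i−1}, 0, v_{i+1},…,v_d)), where for each i the difference M'(f; v₁,…,v_d) − M'(f; v₁,…,v_{i−1}, 0, v_{i+1},…,v_d) is divisible by v_i, so each summand is a well-defined formal power series. -/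
open MvPowerSeries

noncomputable section

/-- The Vandermonde product `∏_{i<j} (t_i - t_j)`. -/
def vanDet (d : ℕ) : MvPowerSeries (Fin d) ℚ :=
  ∏ p ∈ Finset.univ.filter fun p : Fin d × Fin d => p.1 < p.2,
    (MvPowerSeries.X p.1 - MvPowerSeries.X p.2)

/-- The alternant `det (t_j^{λ_i + d - i})` (with rows indexed by `i` zero-indexed, so the
exponent in row `i` is `λ_i + (d - 1 - i)`). -/
def alternant (d : ℕ) (lam : Fin d → ℕ) : MvPowerSeries (Fin d) ℚ :=
  Matrix.det (Matrix.of fun i j : Fin d =>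
    (MvPowerSeries.X j : MvPowerSeries (Fin d) ℚ) ^ (lam i + (d - 1 - (i : ℕ))))

/-- `S` is the Schur polynomial attached to the partition `λ = (λ₁ ≥ ⋯ ≥ λ_d ≥ 0)`,
characterized by `S · ∏_{i<j}(t_i - t_j) = det(t_j^{λ_i + d - i})`; this determines `S`
uniquely since multivariate power series over `ℚ` form a domain. -/
def IsSchur (d : ℕ) (lam : Fin d → ℕ) (S : MvPowerSeries (Fin d) ℚ) : Prop :=
  S * vanDet d = alternant d lam

/-- `m` is the family of coefficients of the expansion `f = Σ_λ m_λ S_λ` of the symmetric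
power series `f` in the Schur family `S`, the sum running over partitions `λ` in at most `d`
parts, i.e. antitone functions `Fin d → ℕ` (coefficientwise, only finitely many partitions
contribute to each coefficient since `S_λ` is homogeneous of degree `|λ|`). -/
def IsSchurExpansion (d : ℕ) (f : MvPowerSeries (Fin d) ℚ)
    (S : (Fin d → ℕ) → MvPowerSeries (Fin d) ℚ) (m : (Fin d → ℕ) → ℚ) : Prop :=
  ∀ e : Fin d →₀ ℕ,
    MvPowerSeries.coeff e f =
      ∑ᶠ (lam : Fin d → ℕ) (_ : Antitone lam), m lam * MvPowerSeries.coeff e (S lam)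

/-- The multiplicity series `M' = Σ_λ m_λ v₁^{λ₁-λ₂} v₂^{λ₂-λ₃} ⋯ v_{d-1}^{λ_{d-1}-λ_d} v_d^{λ_d}`
in the variables `v₁,…,v_d` (where `v_i = t₁⋯t_i`): the coefficient at the exponent `e` is
`m λ` for the unique partition `λ` with `λ_i - λ_{i+1} = e_i`, i.e. `λ_i = Σ_{j ≥ i} e_j`. -/
def multSeries (d : ℕ) (m : (Fin d → ℕ) → ℚ) : MvPowerSeries (Fin d) ℚ :=
  fun e => m fun i => ∑ j ∈ Finset.univ.filter fun j => i ≤ j, e j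

end

noncomputable section

/-- Setting the variable `v_i` to `0` in a power series in `v₁,…,v_d`. -/
def setZero (d : ℕ) (i : Fin d) (M : MvPowerSeries (Fin d) ℚ) : MvPowerSeries (Fin d) ℚ :=
  fun e => if e i = 0 then MvPowerSeries.coeff e M else 0

/-- Division by the variable `v_i` of a power series all of whose monomials are divisible
by `v_i` (shifting the exponent of `v_i` down by one). -/
def divVar (d : ℕ) (i : Fin d) (M : MvPowerSeries (Fin d) ℚ) : MvPowerSeries (Fin d) ℚ :=
  fun e => MvPowerSeries.coeff (e + Finsupp.single i 1) M

end

noncomputable section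
namespace Aux9

open Finset Equiv

variable {d : ℕ}

def deg (e : Fin d →₀ ℕ) : ℕ := ∑ i, e i

def degf (lam : Fin d → ℕ) : ℕ := ∑ i, lam i

def mu (lam : Fin d → ℕ) (i : Fin d) : ℕ := lam i + (d - 1 - (i : ℕ))

def expOf (lam : Fin d → ℕ) (σ : Equiv.Perm (Fin d)) : Fin d →₀ ℕ :=
  Finsupp.equivFunOnFinite.symm fun i => mu lam (σ i)

def DD (d : ℕ) : ℕ := ∑ i : Fin d, (d - 1 - (i : ℕ))

/-- homogeneous of degree n -/
def Hom (n : ℕ) (g : MvPowerSeries (Fin d) ℚ) : Prop :=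
  ∀ e, MvPowerSeries.coeff e g ≠ 0 → deg e = n

lemma deg_add (a b : Fin d →₀ ℕ) : deg (a + b) = deg a + deg b := by
  simp [deg, Finset.sum_add_distrib]

lemma Hom.mul {a b : ℕ} {g h : MvPowerSeries (Fin d) ℚ} (hg : Hom a g) (hh : Hom b h) :
    Hom (a + b) (g * h) := by
  intro e he
  rw [MvPowerSeries.coeff_mul] at he
  obtain ⟨p, hp, hne⟩ := Finset.exists_ne_zero_of_sum_ne_zero he
  rw [Finset.HasAntidiagonal.mem_antidiagonal] at hp
  rw [← hp, deg_add, hg p.1 (left_ne_zero_of_mul hne), hh p.2 (right_ne_zero_of_mul hne)]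

lemma hom_XsubX (i j : Fin d) : Hom 1 ((MvPowerSeries.X i : MvPowerSeries (Fin d) ℚ)
    - MvPowerSeries.X j) := by
  intro e he
  rw [map_sub] at he
  have : MvPowerSeries.coeff e (MvPowerSeries.X i : MvPowerSeries (Fin d) ℚ) ≠ 0
      ∨ MvPowerSeries.coeff e (MvPowerSeries.X j : MvPowerSeries (Fin d) ℚ) ≠ 0 := by
    by_contra hc
    push_neg at hc
    rw [hc.1, hc.2, sub_zero] at he
    exact he rfl
  rcases this with h | h <;>
  · rw [MvPowerSeries.coeff_X] at h
    split_ifs at h with hh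
    · subst hh; simp [deg, Finsupp.single_apply, Finset.sum_ite_eq']
    · exact absurd rfl h

lemma hom_prod {ι : Type*} (s : Finset ι) (F : ι → MvPowerSeries (Fin d) ℚ)
    (hF : ∀ x ∈ s, Hom 1 (F x)) : Hom s.card (∏ x ∈ s, F x) := by
  classical
  induction s using Finset.cons_induction with
  | empty =>
    intro e he
    rw [Finset.prod_empty] at he
    have : e = 0 := by
      by_contra hc
      rw [MvPowerSeries.coeff_one, if_neg hc] at he
      exact he rfl
    simp [this, deg]
  | cons x s hx ih =>
    rw [Finset.prod_cons, Finset.card_cons, add_comm s.card 1]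
    exact (hF x (Finset.mem_cons_self x s)).mul
      (ih fun y hy => hF y (Finset.mem_cons_of_mem hy))

lemma card_pairs : (Finset.univ.filter fun p : Fin d × Fin d => p.1 < p.2).card = DD d := by
  rw [DD, Finset.card_filter]
  rw [show (Finset.univ : Finset (Fin d × Fin d)) = Finset.univ ×ˢ Finset.univ from rfl,
    Finset.sum_product]
  refine Finset.sum_congr rfl fun i _ => ?_
  rw [← Finset.card_filter]
  have : Finset.univ.filter (fun j : Fin d => i < j) = Finset.Ioi i := by
    ext j; simp
  rw [this, Fin.card_Ioi]

lemma hom_vanDet : Hom (DD d) (vanDet d) := by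
  rw [← card_pairs]
  exact hom_prod _ _ fun p _ => hom_XsubX p.1 p.2



lemma prod_X_pow (s : Finset (Fin d)) (k : Fin d → ℕ) :
    (∏ i ∈ s, (MvPowerSeries.X i : MvPowerSeries (Fin d) ℚ) ^ k i)
      = MvPowerSeries.monomial (∑ i ∈ s, Finsupp.single i (k i)) 1 := by
  classical
  induction s using Finset.cons_induction with
  | empty => simp [MvPowerSeries.monomial_zero_one]
  | cons x s hx ih =>
    rw [Finset.prod_cons, Finset.sum_cons, ih, MvPowerSeries.X_pow_eq,
      MvPowerSeries.monomial_mul_monomial, one_mul]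

lemma sum_single_eq (k : Fin d → ℕ) :
    (∑ i : Fin d, Finsupp.single i (k i)) = Finsupp.equivFunOnFinite.symm k := by
  ext j
  rw [Finset.sum_apply']
  simp [Finsupp.single_apply, Finset.sum_ite_eq']

lemma prod_X_pow_univ (k : Fin d → ℕ) :
    (∏ i : Fin d, (MvPowerSeries.X i : MvPowerSeries (Fin d) ℚ) ^ k i)
      = MvPowerSeries.monomial (Finsupp.equivFunOnFinite.symm k) 1 := by
  rw [prod_X_pow, sum_single_eq]

lemma expOf_apply (lam : Fin d → ℕ) (σ : Equiv.Perm (Fin d)) (i : Fin d) :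
    expOf lam σ i = mu lam (σ i) := rfl

lemma alternant_eq (lam : Fin d → ℕ) :
    alternant d lam = ∑ σ : Equiv.Perm (Fin d),
      Equiv.Perm.sign σ • MvPowerSeries.monomial (expOf lam σ) 1 := by
  rw [alternant, Matrix.det_apply]
  refine Finset.sum_congr rfl fun σ _ => ?_
  congr 1
  rw [show (∏ i, Matrix.of (fun i j : Fin d =>
      (MvPowerSeries.X j : MvPowerSeries (Fin d) ℚ) ^ (lam i + (d - 1 - (i : ℕ)))) (σ i) i)
    = ∏ i : Fin d, (MvPowerSeries.X i : MvPowerSeries (Fin d) ℚ) ^ (mu lam (σ i)) from rfl]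
  rw [prod_X_pow_univ]
  rfl

lemma coeff_alternant (lam : Fin d → ℕ) (e : Fin d →₀ ℕ) :
    MvPowerSeries.coeff e (alternant d lam)
      = ∑ σ : Equiv.Perm (Fin d),
          ((Equiv.Perm.sign σ : ℤ) : ℚ) * (if e = expOf lam σ then 1 else 0) := by
  rw [alternant_eq, map_sum]
  refine Finset.sum_congr rfl fun σ _ => ?_
  rw [Units.smul_def, map_zsmul, MvPowerSeries.coeff_monomial, zsmul_eq_mul]

lemma deg_expOf (lam : Fin d → ℕ) (σ : Equiv.Perm (Fin d)) :
    deg (expOf lam σ) = degf lam + DD d := by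
  rw [deg, degf, DD, ← Finset.sum_add_distrib]
  rw [show (∑ i, expOf lam σ i) = ∑ i, mu lam (σ i) from rfl]
  rw [Equiv.sum_comp σ (fun i => mu lam i)]
  rfl

lemma hom_alternant (lam : Fin d → ℕ) : Hom (degf lam + DD d) (alternant d lam) := by
  intro e he
  rw [coeff_alternant] at he
  obtain ⟨σ, _, hne⟩ := Finset.exists_ne_zero_of_sum_ne_zero he
  have : e = expOf lam σ := by
    by_contra hc
    rw [if_neg hc, mul_zero] at hne
    exact hne rfl
  rw [this, deg_expOf]

lemma strictAnti_mu {lam : Fin d → ℕ} (h : Antitone lam) : StrictAnti (mu lam) := by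
  intro i j hij
  have h1 : lam j ≤ lam i := h hij.le
  have h2 : (j : ℕ) < d := j.isLt
  have h3 : (i : ℕ) < (j : ℕ) := hij
  simp only [mu]
  omega

lemma perm_eq_one_of_strictMono {σ : Equiv.Perm (Fin d)} (h : StrictMono (σ : Fin d → Fin d)) :
    σ = 1 := by
  have hinv : StrictMono (σ⁻¹ : Equiv.Perm (Fin d)) := by
    intro a b hab
    have := h.lt_iff_lt (a := σ⁻¹ a) (b := σ⁻¹ b)
    simp only [Equiv.Perm.coe_inv, Equiv.apply_symm_apply] at this
    exact this.mp hab
  ext i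
  haveI : WellFoundedLT (Fin d) := inferInstance
  have h1 : i ≤ σ i := StrictMono.le_apply (f := (σ : Fin d → Fin d)) h
  have h2 : i ≤ σ⁻¹ i := StrictMono.le_apply (f := ((σ⁻¹ : Equiv.Perm (Fin d)) : Fin d → Fin d)) hinv
  have h3 : σ i ≤ σ (σ⁻¹ i) := h.monotone h2
  rw [Equiv.Perm.coe_inv, Equiv.apply_symm_apply] at h3
  exact le_antisymm h3 h1

lemma expOf_one_eq_iff {lam0 lam : Fin d → ℕ} (h0 : Antitone lam0) (h : Antitone lam)
    (σ : Equiv.Perm (Fin d)) : expOf lam0 1 = expOf lam σ ↔ lam = lam0 ∧ σ = 1 := by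
  constructor
  · intro heq
    have hfun : ∀ i, mu lam0 i = mu lam (σ i) := fun i => by
      have := congrArg (fun g => g i) (congrArg (Finsupp.equivFunOnFinite) heq)
      simpa [expOf] using this
    have hσ : StrictMono (σ : Fin d → Fin d) := by
      intro a b hab
      have : mu lam (σ a) > mu lam (σ b) := by
        rw [← hfun a, ← hfun b]; exact strictAnti_mu h0 hab
      by_contra hc
      push_neg at hc
      rcases lt_or_eq_of_le hc with hlt | heqq
      · exact absurd ((strictAnti_mu h) hlt) (by omega)
      · rw [heqq] at this; omega
    have hσ1 : σ = 1 := perm_eq_one_of_strictMono hσ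
    subst hσ1
    refine ⟨funext fun i => ?_, rfl⟩
    have hi := hfun i
    simp only [mu, Equiv.Perm.coe_one, id_eq] at hi
    omega
  · rintro ⟨rfl, rfl⟩; rfl




lemma coeff_alternant_antitone {lam0 lam : Fin d → ℕ} (h0 : Antitone lam0) (h : Antitone lam) :
    MvPowerSeries.coeff (expOf lam0 1) (alternant d lam) = if lam = lam0 then 1 else 0 := by
  rw [coeff_alternant]
  split_ifs with hl
  · subst hl
    rw [Finset.sum_eq_single (1 : Equiv.Perm (Fin d))]
    · simp
    · intro σ _ hσ
      rw [if_neg, mul_zero]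
      intro hc
      exact hσ ((expOf_one_eq_iff h0 h σ).mp hc).2
    · simp
  · refine Finset.sum_eq_zero fun σ _ => ?_
    rw [if_neg, mul_zero]
    intro hc
    exact hl ((expOf_one_eq_iff h0 h σ).mp hc).1

lemma X_sub_X_ne_zero {i j : Fin d} (hij : i ≠ j) :
    (MvPowerSeries.X i : MvPowerSeries (Fin d) ℚ) - MvPowerSeries.X j ≠ 0 := by
  intro h0
  have := congrArg (MvPowerSeries.coeff (Finsupp.single i 1)) h0
  rw [map_sub, MvPowerSeries.coeff_X, MvPowerSeries.coeff_X, if_pos rfl, if_neg, map_zero] at this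
  · norm_num at this
  · intro hc
    rcases (Finsupp.single_eq_single_iff _ _ _ _).mp hc with ⟨h1, _⟩ | ⟨h1, _⟩
    · exact hij h1
    · norm_num at h1

lemma vanDet_ne_zero : vanDet d ≠ 0 := by
  rw [vanDet]
  rw [Finset.prod_ne_zero_iff]
  intro p hp
  rw [Finset.mem_filter] at hp
  exact X_sub_X_ne_zero (ne_of_lt hp.2)

def addBox (lam : Fin d → ℕ) (k : Fin d) : Fin d → ℕ := fun i => lam i + if i = k then 1 else 0

def pred (k : Fin d) : Fin d := ⟨(k : ℕ) - 1, Nat.lt_of_le_of_lt (Nat.sub_le _ _) k.isLt⟩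

def addable (lam : Fin d → ℕ) (k : Fin d) : Prop := (k : ℕ) = 0 ∨ lam k < lam (pred k)

instance (lam : Fin d → ℕ) (k : Fin d) : Decidable (addable lam k) := by
  unfold addable; infer_instance

lemma expOf_addBox (lam : Fin d → ℕ) (k : Fin d) (σ : Equiv.Perm (Fin d)) :
    expOf (addBox lam k) σ = expOf lam σ + Finsupp.single (σ⁻¹ k) 1 := by
  ext i
  rw [Finsupp.add_apply, expOf_apply, expOf_apply, Finsupp.single_apply]
  have : σ i = k ↔ σ⁻¹ k = i := by
    constructor
    · intro h; rw [← h]; simp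
    · intro h; rw [← h]; simp
  simp only [mu, addBox]
  by_cases h : σ i = k
  · rw [if_pos h, if_pos (this.mp h)]
    omega
  · rw [if_neg h, if_neg fun hc => h (this.mpr hc)]
    omega

lemma alternant_mul_psum (lam : Fin d → ℕ) :
    alternant d lam * (∑ k : Fin d, (MvPowerSeries.X k : MvPowerSeries (Fin d) ℚ))
      = ∑ k : Fin d, alternant d (addBox lam k) := by
  simp only [alternant_eq]
  conv_rhs => rw [Finset.sum_comm]
  rw [Finset.sum_mul]
  refine Finset.sum_congr rfl fun σ _ => ?_
  rw [smul_mul_assoc, ← Finset.smul_sum]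
  congr 1
  calc (MvPowerSeries.monomial (expOf lam σ) 1)
        * ∑ k : Fin d, (MvPowerSeries.X k : MvPowerSeries (Fin d) ℚ)
      = ∑ k : Fin d, MvPowerSeries.monomial (expOf lam σ + Finsupp.single k 1) 1 := by
        rw [Finset.mul_sum]
        refine Finset.sum_congr rfl fun k _ => ?_
        rw [MvPowerSeries.X_def, MvPowerSeries.monomial_mul_monomial, one_mul]
    _ = ∑ k : Fin d, MvPowerSeries.monomial (expOf lam σ + Finsupp.single (σ⁻¹ k) 1) 1 := by
        rw [← Equiv.sum_comp σ⁻¹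
          (fun k => MvPowerSeries.monomial (expOf lam σ + Finsupp.single k 1) 1)]
    _ = ∑ k : Fin d, MvPowerSeries.monomial (expOf (addBox lam k) σ) 1 := by
        refine Finset.sum_congr rfl fun k _ => ?_
        rw [expOf_addBox]

lemma alternant_addBox_eq_zero {lam : Fin d → ℕ} (h : Antitone lam) {k : Fin d}
    (hk : ¬ addable lam k) : alternant d (addBox lam k) = 0 := by
  rw [addable] at hk
  push_neg at hk
  obtain ⟨hk0, hge⟩ := hk
  have hpk : ((pred k : Fin d) : ℕ) = (k : ℕ) - 1 := rfl
  have hple : pred k ≤ k := by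
    rw [Fin.le_def, hpk]
    omega
  have heq : lam (pred k) = lam k := le_antisymm hge (h hple)
  have h1 : pred k ≠ k := by
    intro hc
    have h2 : ((pred k : Fin d) : ℕ) = (k : ℕ) := congrArg Fin.val hc
    omega
  rw [alternant]
  apply Matrix.det_zero_of_row_eq (i := pred k) (j := k) h1
  funext j
  simp only [Matrix.of_apply]
  congr 1
  have hkd : (k : ℕ) < d := k.isLt
  have hval : addBox lam k (pred k) = lam k := by
    simp only [addBox, if_neg h1, heq, add_zero]
  have hval2 : addBox lam k k = lam k + 1 := by
    simp [addBox]
  rw [hval, hval2, hpk]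
  omega

lemma antitone_addBox {lam : Fin d → ℕ} (h : Antitone lam) {k : Fin d} (hk : addable lam k) :
    Antitone (addBox lam k) := by
  intro i j hij
  have hji : lam j ≤ lam i := h hij
  simp only [addBox]
  by_cases hik : i = k <;> by_cases hjk : j = k
  · rw [if_pos hik, if_pos hjk]; omega
  · rw [if_pos hik, if_neg hjk]; omega
  · rw [if_pos hjk, if_neg hik]
    have h1 : (i : ℕ) ≤ (k : ℕ) := hjk ▸ hij
    have h2 : (i : ℕ) ≠ (k : ℕ) := fun hc => hik (Fin.ext hc)
    have hjlam : lam j = lam k := by rw [hjk]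
    rcases hk with hk0 | hlt
    · omega
    · have hipk : i ≤ pred k := by
        rw [Fin.le_def]
        have : ((pred k : Fin d) : ℕ) = (k : ℕ) - 1 := rfl
        omega
      have h3 := h hipk
      omega
  · rw [if_neg hik, if_neg hjk]
    omega

lemma pieri {SS : (Fin d → ℕ) → MvPowerSeries (Fin d) ℚ}
    (hS : ∀ lam : Fin d → ℕ, Antitone lam → IsSchur d lam (SS lam))
    {lam : Fin d → ℕ} (hlam : Antitone lam) :
    SS lam * (∑ k : Fin d, (MvPowerSeries.X k : MvPowerSeries (Fin d) ℚ))
      = ∑ k ∈ Finset.univ.filter (fun k => addable lam k), SS (addBox lam k) := by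
  apply mul_right_cancel₀ (vanDet_ne_zero (d := d))
  calc SS lam * (∑ k : Fin d, (MvPowerSeries.X k : MvPowerSeries (Fin d) ℚ)) * vanDet d
      = (SS lam * vanDet d) * (∑ k : Fin d, (MvPowerSeries.X k : MvPowerSeries (Fin d) ℚ)) := by
        ring
    _ = alternant d lam * (∑ k : Fin d, (MvPowerSeries.X k : MvPowerSeries (Fin d) ℚ)) := by
        rw [hS lam hlam]
    _ = ∑ k : Fin d, alternant d (addBox lam k) := alternant_mul_psum lam
    _ = ∑ k ∈ Finset.univ.filter (fun k => addable lam k), alternant d (addBox lam k) := by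
        rw [Finset.sum_filter_of_ne]
        intro k _ hne
        by_contra hc
        exact hne (alternant_addBox_eq_zero hlam hc)
    _ = ∑ k ∈ Finset.univ.filter (fun k => addable lam k), SS (addBox lam k) * vanDet d := by
        refine Finset.sum_congr rfl fun k hk => ?_
        rw [Finset.mem_filter] at hk
        rw [hS _ (antitone_addBox hlam hk.2)]
    _ = (∑ k ∈ Finset.univ.filter (fun k => addable lam k), SS (addBox lam k)) * vanDet d := by
        rw [Finset.sum_mul]

lemma hom_S {Sl : MvPowerSeries (Fin d) ℚ} {lam : Fin d → ℕ}
    (hs : IsSchur d lam Sl) : Hom (degf lam) Sl := by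
  intro e he
  by_contra hne
  set n := deg e with hn
  set comp : MvPowerSeries (Fin d) ℚ :=
    (fun a => if deg a = n then MvPowerSeries.coeff a Sl else 0) with hcomp
  have hcoeff : ∀ a, MvPowerSeries.coeff a comp
      = if deg a = n then MvPowerSeries.coeff a Sl else 0 := fun a => rfl
  have hzero : comp * vanDet d = 0 := by
    ext E
    rw [map_zero, MvPowerSeries.coeff_mul]
    by_cases hE : deg E = n + DD d
    · have h1 : ∑ p ∈ Finset.HasAntidiagonal.antidiagonal E,
          MvPowerSeries.coeff p.1 comp * MvPowerSeries.coeff p.2 (vanDet d)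
          = MvPowerSeries.coeff E (Sl * vanDet d) := by
        rw [MvPowerSeries.coeff_mul]
        refine Finset.sum_congr rfl fun p hp => ?_
        rw [Finset.HasAntidiagonal.mem_antidiagonal] at hp
        rw [hcoeff]
        split_ifs with h2
        · rfl
        · have hV : MvPowerSeries.coeff p.2 (vanDet d) = 0 := by
            by_contra hc
            have := hom_vanDet p.2 hc
            rw [← hp, deg_add] at hE
            omega
          rw [hV, mul_zero, mul_zero]
      rw [h1, hs]
      by_contra hc
      have := hom_alternant lam E hc
      omega
    · refine Finset.sum_eq_zero fun p hp => ?_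
      rw [Finset.HasAntidiagonal.mem_antidiagonal] at hp
      rw [hcoeff]
      split_ifs with h2
      · by_contra hc
        have hV := hom_vanDet p.2 (right_ne_zero_of_mul hc)
        rw [← hp, deg_add] at hE
        omega
      · rw [zero_mul]
  have : comp = 0 := by
    rcases mul_eq_zero.mp hzero with h | h
    · exact h
    · exact absurd h vanDet_ne_zero
  have : MvPowerSeries.coeff e comp = 0 := by rw [this, map_zero]
  rw [hcoeff, if_pos rfl] at this
  exact he this


open scoped Classical


def lamFinset (d N : ℕ) : Finset (Fin d → ℕ) := Fintype.piFinset fun _ => Finset.range (N + 1)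

lemma mem_lamFinset {N : ℕ} {lam : Fin d → ℕ} : lam ∈ lamFinset d N ↔ ∀ i, lam i ≤ N := by
  simp [lamFinset, Nat.lt_succ_iff]

lemma lamFinset_mono {N M : ℕ} (h : N ≤ M) : lamFinset d N ⊆ lamFinset d M := by
  intro lam hl
  rw [mem_lamFinset] at *
  exact fun i => le_trans (hl i) h

lemma le_degf (lam : Fin d → ℕ) (i : Fin d) : lam i ≤ degf lam :=
  Finset.single_le_sum (fun j _ => Nat.zero_le _) (Finset.mem_univ i)

lemma mem_lamFinset_of_degf {N : ℕ} {lam : Fin d → ℕ} (h : degf lam ≤ N) :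
    lam ∈ lamFinset d N :=
  mem_lamFinset.mpr fun i => le_trans (le_degf lam i) h

lemma ite_sum {P : Prop} [Decidable P] {α : Type*} (s : Finset α) (f : α → ℚ) :
    (if P then ∑ x ∈ s, f x else 0) = ∑ x ∈ s, if P then f x else 0 := by
  split_ifs <;> simp

lemma finsum_expand (F : (Fin d → ℕ) → ℚ) (N : ℕ)
    (hF : ∀ lam, Antitone lam → F lam ≠ 0 → lam ∈ lamFinset d N) :
    (∑ᶠ (lam : Fin d → ℕ) (_ : Antitone lam), F lam)
      = ∑ lam ∈ lamFinset d N, if Antitone lam then F lam else 0 := by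
  have h1 : (fun lam : Fin d → ℕ => ∑ᶠ (_ : Antitone lam), F lam)
      = fun lam => if Antitone lam then F lam else 0 := by
    funext lam
    exact finsum_eq_if
  rw [finsum_congr (fun lam => congrFun h1 lam)]
  apply finsum_eq_sum_of_support_subset
  intro lam hl
  rw [Function.mem_support] at hl
  by_cases ha : Antitone lam
  · rw [if_pos ha] at hl
    exact hF lam ha hl
  · rw [if_neg ha] at hl
    exact absurd rfl hl

/-- linear independence of the Schur family -/
lemma schur_ext {SS : (Fin d → ℕ) → MvPowerSeries (Fin d) ℚ}
    (hS : ∀ lam : Fin d → ℕ, Antitone lam → IsSchur d lam (SS lam))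
    (c : (Fin d → ℕ) → ℚ)
    (hc : ∀ e : Fin d →₀ ℕ, ∑ lam ∈ lamFinset d (deg e),
      (if Antitone lam then c lam * MvPowerSeries.coeff e (SS lam) else 0) = 0)
    {mu0 : Fin d → ℕ} (h0 : Antitone mu0) : c mu0 = 0 := by
  set E := expOf mu0 1 with hE
  have hdegE : deg E = degf mu0 + DD d := deg_expOf mu0 1
  set B := deg E with hB
  have stepA : ∑ lam ∈ lamFinset d B,
      (if Antitone lam then c lam * MvPowerSeries.coeff E (alternant d lam) else 0) = c mu0 := by
    rw [Finset.sum_eq_single mu0]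
    · rw [if_pos h0, coeff_alternant_antitone h0 h0, if_pos rfl, mul_one]
    · intro lam _ hne
      split_ifs with ha
      · rw [coeff_alternant_antitone h0 ha, if_neg hne, mul_zero]
      · rfl
    · intro habs
      exact absurd (mem_lamFinset_of_degf (by omega)) habs
  have stepB : ∑ lam ∈ lamFinset d B,
      (if Antitone lam then c lam * MvPowerSeries.coeff E (alternant d lam) else 0) = 0 := by
    have h1 : ∀ lam ∈ lamFinset d B,
        (if Antitone lam then c lam * MvPowerSeries.coeff E (alternant d lam) else 0)
        = ∑ p ∈ Finset.HasAntidiagonal.antidiagonal E,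
            (if Antitone lam then c lam * MvPowerSeries.coeff p.1 (SS lam) else 0)
              * MvPowerSeries.coeff p.2 (vanDet d) := by
      intro lam _
      split_ifs with ha
      · rw [← hS lam ha, MvPowerSeries.coeff_mul, Finset.mul_sum]
        refine Finset.sum_congr rfl fun p _ => ?_
        ring
      · rw [eq_comm]
        exact Finset.sum_eq_zero fun p _ => by rw [zero_mul]
    rw [Finset.sum_congr rfl h1, Finset.sum_comm]
    refine Finset.sum_eq_zero fun p hp => ?_
    rw [Finset.HasAntidiagonal.mem_antidiagonal] at hp
    rw [← Finset.sum_mul]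
    have h2 : ∑ lam ∈ lamFinset d B,
        (if Antitone lam then c lam * MvPowerSeries.coeff p.1 (SS lam) else 0) = 0 := by
      rw [← Finset.sum_subset (lamFinset_mono (show deg p.1 ≤ B by
        rw [hB, ← hp, deg_add]; omega))]
      · exact hc p.1
      · intro lam _ hnot
        split_ifs with ha
        · by_contra hne
          have hco : MvPowerSeries.coeff p.1 (SS lam) ≠ 0 := by
            intro hz
            rw [hz, mul_zero] at hne
            exact hne rfl
          have := hom_S (hS lam ha) p.1 hco
          exact hnot (mem_lamFinset_of_degf (by omega))
        · rfl
    rw [h2, zero_mul]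
  rw [← stepA, stepB]




def succVal (lam : Fin d → ℕ) (k : Fin d) : ℕ :=
  if h : (k : ℕ) + 1 < d then lam ⟨(k : ℕ) + 1, h⟩ else 0

def removable (lam : Fin d → ℕ) (k : Fin d) : Prop := succVal lam k < lam k

def remBox (lam : Fin d → ℕ) (k : Fin d) : Fin d → ℕ :=
  fun i => lam i - if i = k then 1 else 0

def nmul (m : (Fin d → ℕ) → ℚ) (lam : Fin d → ℕ) : ℚ :=
  ∑ k ∈ Finset.univ.filter (fun k => removable lam k), m (remBox lam k)

lemma deg_mono {a b : Fin d →₀ ℕ} (h : a ≤ b) : deg a ≤ deg b :=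
  Finset.sum_le_sum fun i _ => Finsupp.le_def.mp h i

lemma degf_addBox (lam : Fin d → ℕ) (k : Fin d) : degf (addBox lam k) = degf lam + 1 := by
  rw [degf, degf]
  simp only [addBox]
  rw [Finset.sum_add_distrib, Finset.sum_ite_eq' Finset.univ k (fun _ => 1)]
  simp

lemma remBox_addBox (lam : Fin d → ℕ) (k : Fin d) : remBox (addBox lam k) k = lam := by
  funext i
  simp only [remBox, addBox]
  split_ifs <;> omega

lemma addBox_remBox {mu : Fin d → ℕ} {k : Fin d} (h : 1 ≤ mu k) :
    addBox (remBox mu k) k = mu := by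
  funext i
  simp only [remBox, addBox]
  split_ifs with hik
  · subst hik; omega
  · omega

lemma one_le_of_removable {mu : Fin d → ℕ} {k : Fin d} (h : removable mu k) : 1 ≤ mu k := by
  rw [removable] at h
  omega

lemma removable_addBox {lam : Fin d → ℕ} (h : Antitone lam) (k : Fin d) :
    removable (addBox lam k) k := by
  rw [removable, succVal]
  have hkk : addBox lam k k = lam k + 1 := by simp [addBox]
  rw [hkk]
  split_ifs with h1
  · have hne : (⟨(k : ℕ) + 1, h1⟩ : Fin d) ≠ k := by
      intro hc
      have := congrArg Fin.val hc
      simp at this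
    have hab : addBox lam k ⟨(k : ℕ) + 1, h1⟩ = lam ⟨(k : ℕ) + 1, h1⟩ := by
      simp [addBox, hne]
    rw [hab]
    have := h (show k ≤ ⟨(k : ℕ) + 1, h1⟩ by simp [Fin.le_def])
    omega
  · omega

lemma antitone_remBox {mu : Fin d → ℕ} {k : Fin d} (h : Antitone mu) (hr : removable mu k) :
    Antitone (remBox mu k) := by
  intro i j hij
  have hji : mu j ≤ mu i := h hij
  simp only [remBox]
  by_cases hik : i = k <;> by_cases hjk : j = k
  · rw [if_pos hik, if_pos hjk]; omega
  · -- i = k, j ≠ k, k ≤ j so k < j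
    rw [if_pos hik, if_neg hjk]
    have h1 : (k : ℕ) ≤ (j : ℕ) := hik ▸ hij
    have h2 : (k : ℕ) ≠ (j : ℕ) := fun hc => hjk (Fin.ext hc.symm)
    have h3 : (k : ℕ) + 1 < d := by
      have := j.isLt
      omega
    rw [removable, succVal, dif_pos h3] at hr
    have h4 : mu j ≤ mu ⟨(k : ℕ) + 1, h3⟩ := h (by rw [Fin.le_def]; simp; omega)
    have h5 : mu i = mu k := by rw [hik]
    omega
  · rw [if_neg hik, if_pos hjk]
    omega
  · rw [if_neg hik, if_neg hjk]
    omega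

lemma addable_remBox {mu : Fin d → ℕ} {k : Fin d} (h : Antitone mu) (hr : removable mu k) :
    addable (remBox mu k) k := by
  by_cases hk0 : (k : ℕ) = 0
  · exact Or.inl hk0
  · right
    have h1 : pred k ≠ k := by
      intro hc
      have h2 : ((pred k : Fin d) : ℕ) = (k : ℕ) := congrArg Fin.val hc
      have hpk : ((pred k : Fin d) : ℕ) = (k : ℕ) - 1 := rfl
      omega
    have h2 : pred k ≤ k := by
      rw [Fin.le_def]
      have hpk : ((pred k : Fin d) : ℕ) = (k : ℕ) - 1 := rfl
      omega
    have h3 : mu k ≤ mu (pred k) := h h2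
    have h4 := one_le_of_removable hr
    have hq : (if (k : Fin d) = k then (1 : ℕ) else 0) = 1 := if_pos rfl
    simp only [remBox, if_neg h1, hq, if_true]
    omega

lemma degf_remBox {mu : Fin d → ℕ} {k : Fin d} (h : 1 ≤ mu k) :
    degf (remBox mu k) + 1 = degf mu := by
  conv_rhs => rw [← addBox_remBox h]
  rw [degf_addBox]

lemma coeff_mul_psum (g : MvPowerSeries (Fin d) ℚ) (e : Fin d →₀ ℕ) :
    MvPowerSeries.coeff e (g * ∑ k : Fin d, MvPowerSeries.X k)
      = ∑ k : Fin d, if Finsupp.single k 1 ≤ e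
          then MvPowerSeries.coeff (e - Finsupp.single k 1) g else 0 := by
  rw [Finset.mul_sum, map_sum]
  refine Finset.sum_congr rfl fun k _ => ?_
  rw [MvPowerSeries.X_def, MvPowerSeries.coeff_mul_monomial]
  split_ifs <;> simp

lemma key {SS : (Fin d → ℕ) → MvPowerSeries (Fin d) ℚ}
    (hS : ∀ lam : Fin d → ℕ, Antitone lam → IsSchur d lam (SS lam))
    (f : MvPowerSeries (Fin d) ℚ) (m : (Fin d → ℕ) → ℚ)
    (hm : ∀ e : Fin d →₀ ℕ, MvPowerSeries.coeff e f
      = ∑ᶠ (lam : Fin d → ℕ) (_ : Antitone lam), m lam * MvPowerSeries.coeff e (SS lam))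
    (e : Fin d →₀ ℕ) :
    MvPowerSeries.coeff e (f * ∑ k : Fin d, MvPowerSeries.X k)
      = ∑ lam ∈ lamFinset d (deg e),
          if Antitone lam then nmul m lam * MvPowerSeries.coeff e (SS lam) else 0 := by
  set N := deg e with hN
  -- step 1-3: expand f and regroup
  have step3 : MvPowerSeries.coeff e (f * ∑ k : Fin d, MvPowerSeries.X k)
      = ∑ lam ∈ lamFinset d N, if Antitone lam
          then m lam * MvPowerSeries.coeff e (SS lam * ∑ k : Fin d, MvPowerSeries.X k)
          else 0 := by
    rw [coeff_mul_psum]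
    have h1 : ∀ k : Fin d, Finsupp.single k 1 ≤ e →
        MvPowerSeries.coeff (e - Finsupp.single k 1) f
        = ∑ lam ∈ lamFinset d N, if Antitone lam
            then m lam * MvPowerSeries.coeff (e - Finsupp.single k 1) (SS lam) else 0 := by
      intro k _
      rw [hm]
      apply finsum_expand
      intro lam ha hne
      have hco : MvPowerSeries.coeff (e - Finsupp.single k 1) (SS lam) ≠ 0 := by
        intro hz; rw [hz, mul_zero] at hne; exact hne rfl
      have hdeg := hom_S (hS lam ha) _ hco
      apply mem_lamFinset_of_degf
      rw [← hdeg]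
      exact deg_mono tsub_le_self
    calc ∑ k : Fin d, (if Finsupp.single k 1 ≤ e
            then MvPowerSeries.coeff (e - Finsupp.single k 1) f else 0)
        = ∑ k : Fin d, ∑ lam ∈ lamFinset d N, (if Finsupp.single k 1 ≤ e
            then (if Antitone lam
              then m lam * MvPowerSeries.coeff (e - Finsupp.single k 1) (SS lam) else 0)
            else 0) := by
          refine Finset.sum_congr rfl fun k _ => ?_
          split_ifs with hk
          · rw [h1 k hk]
          · rw [eq_comm]
            exact Finset.sum_eq_zero fun lam _ => rfl
      _ = ∑ lam ∈ lamFinset d N, ∑ k : Fin d, (if Finsupp.single k 1 ≤ e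
            then (if Antitone lam
              then m lam * MvPowerSeries.coeff (e - Finsupp.single k 1) (SS lam) else 0)
            else 0) := Finset.sum_comm
      _ = ∑ lam ∈ lamFinset d N, if Antitone lam
            then m lam * MvPowerSeries.coeff e (SS lam * ∑ k : Fin d, MvPowerSeries.X k)
            else 0 := by
          refine Finset.sum_congr rfl fun lam _ => ?_
          rw [coeff_mul_psum, Finset.mul_sum]
          by_cases ha : Antitone lam
          · simp only [if_pos ha]
            refine Finset.sum_congr rfl fun k _ => ?_
            split_ifs <;> simp
          · simp only [if_neg ha]
            exact Finset.sum_eq_zero fun k _ => by split_ifs <;> rfl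
  rw [step3]
  -- step 4: Pieri
  have step4 : ∀ lam ∈ lamFinset d N, (if Antitone lam
        then m lam * MvPowerSeries.coeff e (SS lam * ∑ k : Fin d, MvPowerSeries.X k) else 0)
      = ∑ k : Fin d, (if Antitone lam ∧ addable lam k ∧ degf lam + 1 = N
          then m lam * MvPowerSeries.coeff e (SS (addBox lam k)) else 0) := by
    intro lam _
    by_cases ha : Antitone lam
    · rw [if_pos ha, pieri hS ha, map_sum, Finset.mul_sum, Finset.sum_filter]
      refine Finset.sum_congr rfl fun k _ => ?_
      by_cases hadd : addable lam k
      · rw [if_pos hadd]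
        by_cases hdeg : degf lam + 1 = N
        · rw [if_pos ⟨ha, hadd, hdeg⟩]
        · rw [if_neg (by tauto)]
          by_cases hz : MvPowerSeries.coeff e (SS (addBox lam k)) = 0
          · rw [hz, mul_zero]
          · exfalso
            have := hom_S (hS _ (antitone_addBox ha hadd)) e hz
            rw [degf_addBox] at this
            exact hdeg (by omega)
      · rw [if_neg hadd, if_neg (by tauto)]
    · rw [if_neg ha]
      rw [eq_comm]
      exact Finset.sum_eq_zero fun k _ => by rw [if_neg (by tauto)]
  rw [Finset.sum_congr rfl step4]
  -- step 5: bijection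
  have step5 : ∑ lam ∈ lamFinset d N, ∑ k : Fin d,
        (if Antitone lam ∧ addable lam k ∧ degf lam + 1 = N
          then m lam * MvPowerSeries.coeff e (SS (addBox lam k)) else 0)
      = ∑ mu ∈ lamFinset d N, ∑ k : Fin d,
        (if Antitone mu ∧ removable mu k ∧ degf mu = N
          then m (remBox mu k) * MvPowerSeries.coeff e (SS mu) else 0) := by
    rw [← Finset.sum_product', ← Finset.sum_product']
    rw [← Finset.sum_filter (s := (lamFinset d N) ×ˢ Finset.univ)
      (p := fun p => Antitone p.1 ∧ addable p.1 p.2 ∧ degf p.1 + 1 = N)]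
    rw [← Finset.sum_filter (s := (lamFinset d N) ×ˢ Finset.univ)
      (p := fun q => Antitone q.1 ∧ removable q.1 q.2 ∧ degf q.1 = N)]
    refine Finset.sum_nbij' (fun p => (addBox p.1 p.2, p.2)) (fun q => (remBox q.1 q.2, q.2))
      ?_ ?_ ?_ ?_ ?_
    · rintro ⟨lam, k⟩ hp
      rw [Finset.mem_filter] at hp ⊢
      obtain ⟨-, ha, hadd, hdeg⟩ := hp
      refine ⟨Finset.mem_product.mpr ⟨mem_lamFinset_of_degf (by rw [degf_addBox]; omega),
        Finset.mem_univ _⟩, antitone_addBox ha hadd, removable_addBox ha k, by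
          rw [degf_addBox]; omega⟩
    · rintro ⟨mu, k⟩ hq
      rw [Finset.mem_filter] at hq ⊢
      obtain ⟨-, ha, hrem, hdeg⟩ := hq
      dsimp only at ha hrem hdeg ⊢
      have h1 := one_le_of_removable hrem
      have h2 := degf_remBox (mu := mu) (k := k) h1
      refine ⟨Finset.mem_product.mpr ⟨mem_lamFinset_of_degf (show degf (remBox mu k) ≤ N by omega),
        Finset.mem_univ _⟩,
        antitone_remBox ha hrem, addable_remBox ha hrem,
        show degf (remBox mu k) + 1 = N by omega⟩
    · rintro ⟨lam, k⟩ _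
      simp [remBox_addBox]
    · rintro ⟨mu, k⟩ hq
      rw [Finset.mem_filter] at hq
      obtain ⟨-, -, hrem, -⟩ := hq
      simp [addBox_remBox (one_le_of_removable hrem)]
    · rintro ⟨lam, k⟩ _
      simp [remBox_addBox]
  rw [step5]
  -- step 6: reassemble
  refine Finset.sum_congr rfl fun mu _ => ?_
  by_cases ha : Antitone mu
  · rw [if_pos ha, nmul, Finset.sum_mul, Finset.sum_filter]
    refine Finset.sum_congr rfl fun k _ => ?_
    by_cases hrem : removable mu k
    · rw [if_pos hrem]
      by_cases hdeg : degf mu = N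
      · rw [if_pos ⟨ha, hrem, hdeg⟩]
      · rw [if_neg (by tauto)]
        by_cases hz : MvPowerSeries.coeff e (SS mu) = 0
        · rw [hz, mul_zero]
        · exact absurd (hom_S (hS mu ha) e hz) (by omega)
    · rw [if_neg hrem, if_neg (by tauto)]
  · rw [if_neg ha]
    exact Finset.sum_eq_zero fun k _ => by rw [if_neg (by tauto)]




lemma coeff_X_mul' (k : Fin d) (g : MvPowerSeries (Fin d) ℚ) (e : Fin d →₀ ℕ) :
    MvPowerSeries.coeff e (MvPowerSeries.X k * g)
      = if Finsupp.single k 1 ≤ e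
          then MvPowerSeries.coeff (e - Finsupp.single k 1) g else 0 := by
  rw [MvPowerSeries.X_def, MvPowerSeries.coeff_monomial_mul]
  split_ifs <;> simp

def lamOf (e : Fin d →₀ ℕ) : Fin d → ℕ :=
  fun i => ∑ j ∈ Finset.univ.filter (fun j => i ≤ j), e j

lemma multSeries_coeff (m : (Fin d → ℕ) → ℚ) (e : Fin d →₀ ℕ) :
    MvPowerSeries.coeff e (multSeries d m) = m (lamOf e) := rfl

lemma coeff_setZero (i : Fin d) (M : MvPowerSeries (Fin d) ℚ) (a : Fin d →₀ ℕ) :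
    MvPowerSeries.coeff a (setZero d i M)
      = if a i = 0 then MvPowerSeries.coeff a M else 0 := rfl

lemma coeff_divVar (i : Fin d) (M : MvPowerSeries (Fin d) ℚ) (a : Fin d →₀ ℕ) :
    MvPowerSeries.coeff a (divVar d i M)
      = MvPowerSeries.coeff (a + Finsupp.single i 1) M := rfl

lemma coeff_sub_setZero (i : Fin d) (M : MvPowerSeries (Fin d) ℚ) (a : Fin d →₀ ℕ) :
    MvPowerSeries.coeff a (M - setZero d i M)
      = if a i = 0 then 0 else MvPowerSeries.coeff a M := by
  rw [map_sub, coeff_setZero]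
  split_ifs <;> simp

lemma part1 (i : Fin d) (M : MvPowerSeries (Fin d) ℚ) :
    MvPowerSeries.X i * divVar d i (M - setZero d i M) = M - setZero d i M := by
  apply MvPowerSeries.ext
  intro e
  rw [coeff_X_mul', coeff_sub_setZero]
  by_cases h : e i = 0
  · rw [if_pos h, if_neg]
    rw [Finsupp.single_le_iff, h]
    omega
  · have hle : Finsupp.single i 1 ≤ e := Finsupp.single_le_iff.mpr (by omega)
    rw [if_pos hle, if_neg h, coeff_divVar, tsub_add_cancel_of_le hle, coeff_sub_setZero,
      if_neg h]

lemma antitone_lamOf (e : Fin d →₀ ℕ) : Antitone (lamOf e) := by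
  intro i j hij
  apply Finset.sum_le_sum_of_subset
  intro x hx
  rw [Finset.mem_filter] at hx ⊢
  exact ⟨Finset.mem_univ _, le_trans hij hx.2⟩

lemma lamOf_eq (e : Fin d →₀ ℕ) (k : Fin d) : lamOf e k = e k + succVal (lamOf e) k := by
  rw [succVal]
  split_ifs with h
  · have hset : Finset.univ.filter (fun j : Fin d => k ≤ j)
        = insert k (Finset.univ.filter (fun j : Fin d => (⟨(k : ℕ) + 1, h⟩ : Fin d) ≤ j)) := by
      ext j
      simp only [Finset.mem_filter, Finset.mem_univ, true_and, Finset.mem_insert]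
      rw [Fin.le_def, Fin.le_def]
      constructor
      · intro hj
        by_cases hjk : j = k
        · exact Or.inl hjk
        · right
          have : (k : ℕ) ≠ (j : ℕ) := fun hc => hjk (Fin.ext hc.symm)
          simpa using by omega
      · rintro (rfl | hj)
        · rfl
        · simp at hj; omega
    rw [lamOf, hset, Finset.sum_insert (by simp [Fin.le_def])]
    rfl
  · have hset : Finset.univ.filter (fun j : Fin d => k ≤ j) = {k} := by
      ext j
      simp only [Finset.mem_filter, Finset.mem_univ, true_and, Finset.mem_singleton, Fin.le_def]
      have := j.isLt
      have := k.isLt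
      constructor
      · intro hj
        apply Fin.ext
        omega
      · rintro rfl; rfl
    rw [lamOf, hset, Finset.sum_singleton]
    omega

lemma removable_lamOf_iff (e : Fin d →₀ ℕ) (k : Fin d) :
    removable (lamOf e) k ↔ 1 ≤ e k := by
  rw [removable]
  have := lamOf_eq e k
  omega

lemma sum_sub_single (e : Fin d →₀ ℕ) (i k : Fin d) (h : 1 ≤ e k) :
    lamOf (e - Finsupp.single k 1) i = lamOf e i - (if i ≤ k then 1 else 0) := by
  have hval : ∀ j, ((e - Finsupp.single k 1 : Fin d →₀ ℕ)) j = e j - (if j = k then 1 else 0) := by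
    intro j
    rw [Finsupp.tsub_apply, Finsupp.single_apply]
    by_cases hj : j = k
    · rw [if_pos hj, if_pos hj.symm]
    · rw [if_neg hj, if_neg fun hc => hj hc.symm]
  rw [lamOf, lamOf]
  by_cases hik : i ≤ k
  · have hk : k ∈ Finset.univ.filter (fun j : Fin d => i ≤ j) := by
      simp [hik]
    rw [← Finset.add_sum_erase _ _ hk, ← Finset.add_sum_erase _ (fun j => e j) hk]
    have h2 : ∑ j ∈ (Finset.univ.filter (fun j : Fin d => i ≤ j)).erase k,
        ((e - Finsupp.single k 1 : Fin d →₀ ℕ)) j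
        = ∑ j ∈ (Finset.univ.filter (fun j : Fin d => i ≤ j)).erase k, e j := by
      refine Finset.sum_congr rfl fun j hj => ?_
      rw [hval, if_neg (Finset.ne_of_mem_erase hj), tsub_zero]
    rw [h2, hval k, if_pos rfl, if_pos hik]
    omega
  · have h2 : ∀ j ∈ Finset.univ.filter (fun j : Fin d => i ≤ j),
        ((e - Finsupp.single k 1 : Fin d →₀ ℕ)) j = e j := by
      intro j hj
      rw [Finset.mem_filter] at hj
      rw [hval, if_neg, tsub_zero]
      intro hc
      exact hik (hc ▸ hj.2)
    rw [Finset.sum_congr rfl h2, if_neg hik, tsub_zero]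

lemma sum_add_single (a : Fin d →₀ ℕ) (i k : Fin d) :
    lamOf (a + Finsupp.single k 1) i = lamOf a i + (if i ≤ k then 1 else 0) := by
  rw [lamOf, lamOf]
  have hval : ∀ j, ((a + Finsupp.single k 1 : Fin d →₀ ℕ)) j = a j + (if k = j then 1 else 0) := by
    intro j
    rw [Finsupp.add_apply, Finsupp.single_apply]
  rw [Finset.sum_congr rfl fun j _ => hval j, Finset.sum_add_distrib, Finset.sum_ite_eq]
  simp

lemma lamOf_ge (e : Fin d →₀ ℕ) {i k : Fin d} (hik : i ≤ k) (h : 1 ≤ e k) :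
    1 ≤ lamOf e i := by
  have h1 : lamOf e k ≤ lamOf e i := antitone_lamOf e hik
  have h2 := lamOf_eq e k
  omega

/-- k = 0 case -/
lemma remBox_lamOf_zero (e : Fin d →₀ ℕ) {k : Fin d} (hk : (k : ℕ) = 0) (h : 1 ≤ e k) :
    lamOf (e - Finsupp.single k 1) = remBox (lamOf e) k := by
  funext i
  rw [sum_sub_single e i k h, remBox]
  have : i ≤ k ↔ i = k := by
    rw [Fin.le_def]
    constructor
    · intro h1; exact Fin.ext (by omega)
    · rintro rfl; rfl
  by_cases hik : i ≤ k
  · rw [if_pos hik, if_pos (this.mp hik)]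
  · rw [if_neg hik, if_neg fun hc => hik (this.mpr hc)]

/-- internal case -/
lemma remBox_lamOf_succ (e : Fin d →₀ ℕ) {k k' : Fin d} (hkk' : (k' : ℕ) + 1 = (k : ℕ))
    (h : 1 ≤ e k) :
    lamOf (e - Finsupp.single k 1 + Finsupp.single k' 1) = remBox (lamOf e) k := by
  funext i
  rw [sum_add_single, sum_sub_single e i k h, remBox]
  by_cases hik' : i ≤ k'
  · have hik : i ≤ k := by rw [Fin.le_def] at *; omega
    have hne : i ≠ k := by
      intro hc
      rw [Fin.le_def] at hik'
      rw [hc] at hik'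
      omega
    rw [if_pos hik', if_pos hik, if_neg hne]
    have := lamOf_ge e hik h
    omega
  · rw [if_neg hik']
    by_cases hik : i ≤ k
    · have : i = k := by
        apply Fin.ext
        rw [Fin.le_def] at hik hik'
        omega
      rw [if_pos hik, if_pos this]
      omega
    · have : i ≠ k := fun hc => hik (le_of_eq hc)
      rw [if_neg hik, if_neg this]
      omega




lemma coeff_zero_branch (m : (Fin d → ℕ) → ℚ) (e : Fin d →₀ ℕ) (k : Fin d)
    (hk : (k : ℕ) = 0) :
    MvPowerSeries.coeff e (MvPowerSeries.X k * multSeries d m)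
      = if 1 ≤ e k then m (remBox (lamOf e) k) else 0 := by
  rw [coeff_X_mul']
  by_cases h : 1 ≤ e k
  · rw [if_pos (Finsupp.single_le_iff.mpr h), if_pos h, multSeries_coeff,
      remBox_lamOf_zero e hk h]
  · rw [if_neg (fun hc => h (Finsupp.single_le_iff.mp hc)), if_neg h]

lemma coeff_branch (m : (Fin d → ℕ) → ℚ) (e : Fin d →₀ ℕ) (k kp : Fin d)
    (hkp : (kp : ℕ) + 1 = (k : ℕ)) :
    MvPowerSeries.coeff e (MvPowerSeries.X k *
        divVar d kp (multSeries d m - setZero d kp (multSeries d m)))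
      = if 1 ≤ e k then m (remBox (lamOf e) k) else 0 := by
  rw [coeff_X_mul']
  by_cases h : 1 ≤ e k
  · rw [if_pos (Finsupp.single_le_iff.mpr h), if_pos h, coeff_divVar, coeff_sub_setZero]
    have hne : kp ≠ k := by
      intro hc
      rw [hc] at hkp
      omega
    have hval : ((e - Finsupp.single k 1 + Finsupp.single kp 1 : Fin d →₀ ℕ)) kp
        = e kp + 1 := by
      rw [Finsupp.add_apply, Finsupp.tsub_apply, Finsupp.single_apply, Finsupp.single_apply,
        if_neg (fun hc : k = kp => hne hc.symm), if_pos rfl, tsub_zero]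
    rw [if_neg (by rw [hval]; omega), multSeries_coeff, remBox_lamOf_succ e hkp h]
  · rw [if_neg (fun hc => h (Finsupp.single_le_iff.mp hc)), if_neg h]

lemma nmul_lamOf (m : (Fin d → ℕ) → ℚ) (e : Fin d →₀ ℕ) :
    nmul m (lamOf e) = ∑ k : Fin d, if 1 ≤ e k then m (remBox (lamOf e) k) else 0 := by
  rw [nmul, Finset.sum_filter]
  refine Finset.sum_congr rfl fun k _ => ?_
  by_cases h : removable (lamOf e) k
  · rw [if_pos h, if_pos ((removable_lamOf_iff e k).mp h)]
  · rw [if_neg h, if_neg (fun hc => h ((removable_lamOf_iff e k).mpr hc))]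

lemma fin_sum_split {n : ℕ} (G : Fin (n + 1) → ℚ) (p0 : (0 : ℕ) < n + 1)
    (ps : ∀ i : Fin n, (i : ℕ) + 1 < n + 1) :
    ∑ k : Fin (n + 1), G k = G ⟨0, p0⟩ + ∑ i : Fin n, G ⟨(i : ℕ) + 1, ps i⟩ := by
  rw [Fin.sum_univ_succ]
  have h0 : G 0 = G ⟨0, p0⟩ := congrArg G (Fin.ext (by simp))
  have hs : ∑ i : Fin n, G i.succ = ∑ i : Fin n, G ⟨(i : ℕ) + 1, ps i⟩ :=
    Finset.sum_congr rfl fun i _ => congrArg G (Fin.ext (by simp))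
  rw [h0, hs]


end Aux9
end

/-- branching rule for multiplicity series. For `f` symmetric with Schur
expansion `m` and `f·S_{(1)}` with Schur expansion `m'` (where `S_{(1)} = t₁+⋯+t_d`):
`M'(f·S_{(1)}) = v₁·M'(f) + Σ_{i=1}^{d-1} (v_{i+1}/v_i)·(M'(f) - M'(f)|_{v_i:=0})`,
each difference `M'(f) - M'(f)|_{v_i:=0}` being divisible by `v_i`. -/
theorem stmt9 (d : ℕ) (hd : 1 ≤ d) (f : MvPowerSeries (Fin d) ℚ)
    (hsym : ∀ σ : Equiv.Perm (Fin d), ∀ e : Fin d →₀ ℕ,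
      MvPowerSeries.coeff (Finsupp.equivMapDomain σ e) f = MvPowerSeries.coeff e f)
    (S : (Fin d → ℕ) → MvPowerSeries (Fin d) ℚ)
    (hS : ∀ lam : Fin d → ℕ, Antitone lam → IsSchur d lam (S lam))
    (m m' : (Fin d → ℕ) → ℚ)
    (hm : IsSchurExpansion d f S m)
    (hm' : IsSchurExpansion d
      (f * ∑ i : Fin d, (MvPowerSeries.X i : MvPowerSeries (Fin d) ℚ)) S m') :
    (∀ i : Fin d,
      MvPowerSeries.X i *
          divVar d i (multSeries d m - setZero d i (multSeries d m)) =
        multSeries d m - setZero d i (multSeries d m)) ∧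
    multSeries d m' =
      MvPowerSeries.X (⟨0, by omega⟩ : Fin d) * multSeries d m +
        ∑ i : Fin (d - 1),
          MvPowerSeries.X (⟨(i : ℕ) + 1, by have := i.isLt; omega⟩ : Fin d) *
            divVar d (⟨(i : ℕ), by have := i.isLt; omega⟩ : Fin d)
              (multSeries d m -
                setZero d (⟨(i : ℕ), by have := i.isLt; omega⟩ : Fin d) (multSeries d m)) := by
  obtain ⟨d', rfl⟩ : ∃ d', d = d' + 1 := ⟨d - 1, by omega⟩
  constructor
  · intro i
    exact Aux9.part1 i (multSeries (d' + 1) m)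
  · have hmain : ∀ mu0 : Fin (d' + 1) → ℕ, Antitone mu0 → m' mu0 = Aux9.nmul m mu0 := by
      intro mu0 h0
      have hzero : (fun lam => m' lam - Aux9.nmul m lam) mu0 = 0 := by
        apply Aux9.schur_ext hS (fun lam => m' lam - Aux9.nmul m lam) ?_ h0
        intro e
        have h1 : MvPowerSeries.coeff e
              (f * ∑ i : Fin (d' + 1), (MvPowerSeries.X i : MvPowerSeries (Fin (d' + 1)) ℚ))
            = ∑ lam ∈ Aux9.lamFinset (d' + 1) (Aux9.deg e),
              (if Antitone lam then m' lam * MvPowerSeries.coeff e (S lam) else 0) := by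
          rw [hm' e]
          apply Aux9.finsum_expand
          intro lam ha hne
          have hco : MvPowerSeries.coeff e (S lam) ≠ 0 := fun hz => by
            rw [hz, mul_zero] at hne; exact hne rfl
          exact Aux9.mem_lamFinset_of_degf (le_of_eq (Aux9.hom_S (hS lam ha) e hco).symm)
        have h2 := Aux9.key hS f m hm e
        have h3 : ∀ lam : Fin (d' + 1) → ℕ,
            (if Antitone lam then (m' lam - Aux9.nmul m lam) * MvPowerSeries.coeff e (S lam)
              else 0)
            = (if Antitone lam then m' lam * MvPowerSeries.coeff e (S lam) else 0)
              - (if Antitone lam then Aux9.nmul m lam * MvPowerSeries.coeff e (S lam)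
                  else 0) := by
          intro lam
          split_ifs <;> ring
        rw [Finset.sum_congr rfl fun lam _ => h3 lam, Finset.sum_sub_distrib, ← h1, ← h2,
          sub_self]
      have := hzero
      simp only at this
      linarith
    apply MvPowerSeries.ext
    intro e
    rw [map_add, map_sum]
    rw [Aux9.multSeries_coeff, hmain _ (Aux9.antitone_lamOf e), Aux9.nmul_lamOf]
    rw [Aux9.coeff_zero_branch m e _ rfl]
    have hterm : ∀ i : Fin (d' + 1 - 1),
        MvPowerSeries.coeff e
          (MvPowerSeries.X (⟨(i : ℕ) + 1, by have := i.isLt; omega⟩ : Fin (d' + 1)) *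
            divVar (d' + 1) (⟨(i : ℕ), by have := i.isLt; omega⟩ : Fin (d' + 1))
              (multSeries (d' + 1) m -
                setZero (d' + 1) (⟨(i : ℕ), by have := i.isLt; omega⟩ : Fin (d' + 1))
                  (multSeries (d' + 1) m)))
        = if 1 ≤ e ⟨(i : ℕ) + 1, by have := i.isLt; omega⟩
            then m (Aux9.remBox (Aux9.lamOf e) ⟨(i : ℕ) + 1, by have := i.isLt; omega⟩)
            else 0 := by
      intro i
      exact Aux9.coeff_branch m e _ _ rfl
    rw [Finset.sum_congr rfl fun i _ => hterm i]
    have hd1 : d' + 1 - 1 = d' := rfl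
    rw [Aux9.fin_sum_split
      (fun k => if 1 ≤ e k then m (Aux9.remBox (Aux9.lamOf e) k) else 0) (by omega)
      (fun i : Fin d' => by omega)]
    rfl
end

section
/- In four variables t₁, t₂, t₃, t₄, the generating function of the Schur polynomials indexed by two-row rectangles satisfies Σ_{n≥0} S_{(n,n)}(t₁,t₂,t₃,t₄) = (1 − t₁t₂t₃t₄) / ((1−t₁t₂)(1−t₁t₃)(1−t₁t₄)(1−t₂t₃)(1−t₂t₄)(1−t₃t₄)); equivalently, (Σ_{n≥0} S_{(n,n)}(t₁,t₂,t₃,t₄)) · ∏_{1≤i<j≤4}(1−t_it_j) = 1 − t₁t₂t₃t₄ as formal power series. -/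
open MvPowerSeries

noncomputable section StmtTenAux

open Finsupp

abbrev M4 := MvPowerSeries (Fin 4) ℚ
local notation "Xq" => (MvPowerSeries.X : Fin 4 → M4)

def PP : M4 := ∏ p ∈ Finset.univ.filter fun p : Fin 4 × Fin 4 => p.1 < p.2,
    (1 - Xq p.1 * Xq p.2)
def EE : M4 := 1 - Xq 0 * Xq 1 * Xq 2 * Xq 3
def AA (n : ℕ) : M4 := alternant 4 (fun i => if (i:ℕ) < 2 then n else 0)
def trm (a b c : Fin 4) (p q : ℕ) : M4 := Xq a ^ p * Xq b ^ q * Xq c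
def deg (e : Fin 4 →₀ ℕ) : ℕ := ∑ j, e j

lemma pairs_eq : (Finset.univ.filter fun p : Fin 4 × Fin 4 => p.1 < p.2)
    = {(0,1),(0,2),(0,3),(1,2),(1,3),(2,3)} := by decide

lemma PP_eq : PP = (1 - Xq 0*Xq 1)*((1 - Xq 0*Xq 2)*((1 - Xq 0*Xq 3)*((1 - Xq 1*Xq 2)*((1 - Xq 1*Xq 3)*(1 - Xq 2*Xq 3))))) := by
  rw [PP, pairs_eq]
  repeat rw [Finset.prod_insert (by decide)]
  rw [Finset.prod_singleton]

lemma VV_eq : vanDet 4 = (Xq 0 - Xq 1)*((Xq 0 - Xq 2)*((Xq 0 - Xq 3)*((Xq 1 - Xq 2)*((Xq 1 - Xq 3)*(Xq 2 - Xq 3))))) := by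
  rw [vanDet, pairs_eq]
  repeat rw [Finset.prod_insert (by decide)]
  rw [Finset.prod_singleton]

lemma AA_eq (n : ℕ) : AA n =
    trm 0 1 2 (n+3) (n+2) - trm 0 1 3 (n+3) (n+2)
  - trm 0 2 1 (n+3) (n+2) + trm 0 2 3 (n+3) (n+2)
  + trm 0 3 1 (n+3) (n+2) - trm 0 3 2 (n+3) (n+2)
  - trm 1 0 2 (n+3) (n+2) + trm 1 0 3 (n+3) (n+2)
  + trm 1 2 0 (n+3) (n+2) - trm 1 2 3 (n+3) (n+2)
  - trm 1 3 0 (n+3) (n+2) + trm 1 3 2 (n+3) (n+2)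
  + trm 2 0 1 (n+3) (n+2) - trm 2 0 3 (n+3) (n+2)
  - trm 2 1 0 (n+3) (n+2) + trm 2 1 3 (n+3) (n+2)
  + trm 2 3 0 (n+3) (n+2) - trm 2 3 1 (n+3) (n+2)
  - trm 3 0 1 (n+3) (n+2) + trm 3 0 2 (n+3) (n+2)
  + trm 3 1 0 (n+3) (n+2) - trm 3 1 2 (n+3) (n+2)
  - trm 3 2 0 (n+3) (n+2) + trm 3 2 1 (n+3) (n+2) := by
  rw [AA, alternant]
  simp only [Matrix.det_succ_row_zero, Fin.sum_univ_succ, Matrix.of_apply, Matrix.submatrix_apply,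
    Fin.succAbove, Matrix.det_fin_zero, Matrix.det_unique]
  norm_num [Fin.lt_def, Fin.le_def, Fin.ext_iff, Fin.val_succ, Fin.coe_castSucc]
  simp only [show ((2:Fin 3).succ : Fin 4) = 3 from rfl, show ((2:Fin 3).castSucc : Fin 4) = 2 from rfl,
    show ((1:Fin 2).succ : Fin 3) = 2 from rfl, show ((1:Fin 2).castSucc : Fin 3) = 1 from rfl,
    show ((0:Fin 2).succ : Fin 3) = 1 from rfl, show ((0:Fin 1).succ : Fin 2) = 1 from rfl,
    show ((0:Fin 1).castSucc : Fin 2) = 0 from rfl]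
  simp only [trm]
  ring

def Q01 : M4 := (1 - Xq 0*Xq 2)*(1 - Xq 0*Xq 3)*(1 - Xq 1*Xq 2)*(1 - Xq 1*Xq 3)*(1 - Xq 2*Xq 3)
def Q02 : M4 := (1 - Xq 0*Xq 1)*(1 - Xq 0*Xq 3)*(1 - Xq 1*Xq 2)*(1 - Xq 1*Xq 3)*(1 - Xq 2*Xq 3)
def Q03 : M4 := (1 - Xq 0*Xq 1)*(1 - Xq 0*Xq 2)*(1 - Xq 1*Xq 2)*(1 - Xq 1*Xq 3)*(1 - Xq 2*Xq 3)
def Q12 : M4 := (1 - Xq 0*Xq 1)*(1 - Xq 0*Xq 2)*(1 - Xq 0*Xq 3)*(1 - Xq 1*Xq 3)*(1 - Xq 2*Xq 3)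
def Q13 : M4 := (1 - Xq 0*Xq 1)*(1 - Xq 0*Xq 2)*(1 - Xq 0*Xq 3)*(1 - Xq 1*Xq 2)*(1 - Xq 2*Xq 3)
def Q23 : M4 := (1 - Xq 0*Xq 1)*(1 - Xq 0*Xq 2)*(1 - Xq 0*Xq 3)*(1 - Xq 1*Xq 2)*(1 - Xq 1*Xq 3)

def B (n : ℕ) : M4 :=
    trm 0 1 2 (n+3) (n+2) * Q01 - trm 0 1 3 (n+3) (n+2) * Q01
  - trm 0 2 1 (n+3) (n+2) * Q02 + trm 0 2 3 (n+3) (n+2) * Q02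
  + trm 0 3 1 (n+3) (n+2) * Q03 - trm 0 3 2 (n+3) (n+2) * Q03
  - trm 1 0 2 (n+3) (n+2) * Q01 + trm 1 0 3 (n+3) (n+2) * Q01
  + trm 1 2 0 (n+3) (n+2) * Q12 - trm 1 2 3 (n+3) (n+2) * Q12
  - trm 1 3 0 (n+3) (n+2) * Q13 + trm 1 3 2 (n+3) (n+2) * Q13
  + trm 2 0 1 (n+3) (n+2) * Q02 - trm 2 0 3 (n+3) (n+2) * Q02
  - trm 2 1 0 (n+3) (n+2) * Q12 + trm 2 1 3 (n+3) (n+2) * Q12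
  + trm 2 3 0 (n+3) (n+2) * Q23 - trm 2 3 1 (n+3) (n+2) * Q23
  - trm 3 0 1 (n+3) (n+2) * Q03 + trm 3 0 2 (n+3) (n+2) * Q03
  + trm 3 1 0 (n+3) (n+2) * Q13 - trm 3 1 2 (n+3) (n+2) * Q13
  - trm 3 2 0 (n+3) (n+2) * Q23 + trm 3 2 1 (n+3) (n+2) * Q23

set_option maxHeartbeats 2000000 in
lemma T1 (n : ℕ) : AA n * PP = B n - B (n+1) := by
  rw [AA_eq, PP_eq, B, B]
  simp only [trm, Q01, Q02, Q03, Q12, Q13, Q23]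
  ring

set_option maxHeartbeats 2000000 in
lemma T2 : B 0 = EE * vanDet 4 := by
  rw [B, VV_eq, EE]
  simp only [trm, Q01, Q02, Q03, Q12, Q13, Q23]
  norm_num
  ring

set_option maxHeartbeats 1000000 in
lemma VV_eq_AA0 : vanDet 4 = AA 0 := by
  rw [VV_eq, AA_eq]
  simp only [trm]
  norm_num
  ring

lemma telescope (N : ℕ) : ∑ n ∈ Finset.range N, (AA n * PP) = B 0 - B N := by
  induction N with
  | zero => simp
  | succ k ih => rw [Finset.sum_range_succ, ih, T1]; ring

lemma trm_eq (a b c : Fin 4) (p q : ℕ) :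
    trm a b c p q = monomial (single a p + single b q + single c 1) 1 := by
  rw [trm, X_pow_eq, X_pow_eq, show (Xq c) = monomial (single c 1) 1 from rfl,
    monomial_mul_monomial, monomial_mul_monomial, one_mul, one_mul]

lemma deg_add (a b : Fin 4 →₀ ℕ) : deg (a + b) = deg a + deg b := by
  simp [deg, Finset.sum_add_distrib]

lemma deg_single (a : Fin 4) (k : ℕ) : deg (single a k) = k := by
  simp [deg, Finsupp.single_apply]

lemma coeff_trm (a b c : Fin 4) (p q : ℕ) (e : Fin 4 →₀ ℕ) (h : deg e ≠ p + q + 1) :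
    coeff e (trm a b c p q) = 0 := by
  classical
  rw [trm_eq, coeff_monomial, if_neg]
  rintro rfl
  exact h (by simp [deg_add, deg_single])

lemma coeff_trm_mul (a b c : Fin 4) (p q : ℕ) (G : M4) (e : Fin 4 →₀ ℕ)
    (h : deg e < p + q + 1) : coeff e (trm a b c p q * G) = 0 := by
  rw [trm_eq, coeff_monomial_mul, if_neg]
  intro hle
  have h2 : deg (single a p + single b q + single c 1) ≤ deg e :=
    Finset.sum_le_sum fun j _ => hle j
  simp only [deg_add, deg_single] at h2
  omega

lemma coeff_B (e : Fin 4 →₀ ℕ) (N : ℕ) (h : deg e < 2*N+6) : coeff e (B N) = 0 := by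
  have ht : ∀ (a b c : Fin 4) (G : M4), coeff e (trm a b c (N+3) (N+2) * G) = 0 :=
    fun a b c G => coeff_trm_mul a b c _ _ G e (by omega)
  rw [B]
  simp [ht]

lemma coeff_AA (n : ℕ) (e : Fin 4 →₀ ℕ) (h : deg e ≠ 2*n+6) : coeff e (AA n) = 0 := by
  have ht : ∀ a b c : Fin 4, coeff e (trm a b c (n+3) (n+2)) = 0 :=
    fun a b c => coeff_trm a b c _ _ e (by omega)
  rw [AA_eq]
  simp [ht]

lemma coeff_AA0_one :
    coeff (single (0:Fin 4) 3 + single 1 2 + single 2 1) (AA 0) = 1 := by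
  classical
  rw [AA_eq]
  simp only [map_sub, map_add, trm_eq, coeff_monomial]
  simp only [Finsupp.ext_iff, Fin.forall_fin_succ, Finsupp.single_apply, Finsupp.add_apply]
  norm_num [Fin.ext_iff]

lemma VV_ne : vanDet 4 ≠ 0 := by
  intro h0
  have h1 := coeff_AA0_one
  rw [← VV_eq_AA0, h0, map_zero] at h1
  exact zero_ne_one h1

def homog (k : ℕ) (F : M4) : M4 := fun e => if deg e = k then coeff e F else 0

lemma coeff_homog (k : ℕ) (F : M4) (e : Fin 4 →₀ ℕ) :
    coeff e (homog k F) = if deg e = k then coeff e F else 0 := rfl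

lemma coeff_VV (b : Fin 4 →₀ ℕ) (h : deg b ≠ 6) : coeff b (vanDet 4) = 0 := by
  rw [VV_eq_AA0]
  exact coeff_AA 0 b (by omega)

lemma homog_mul_V (k : ℕ) (F : M4) :
    homog k F * vanDet 4 = homog (k+6) (F * vanDet 4) := by
  classical
  ext e
  rw [coeff_homog, coeff_mul, coeff_mul]
  by_cases hd : deg e = k + 6
  · rw [if_pos hd]
    apply Finset.sum_congr rfl
    rintro ⟨a,b⟩ hab
    have hab' : a + b = e := Finset.HasAntidiagonal.mem_antidiagonal.mp hab
    have hdeg : deg a + deg b = k + 6 := by rw [← deg_add, hab', hd]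
    by_cases ha : deg a = k
    · rw [coeff_homog, if_pos ha]
    · have hb : MvPowerSeries.coeff b (vanDet 4) = 0 := coeff_VV b (by omega)
      simp [coeff_homog, ha, hb]
  · rw [if_neg hd]
    apply Finset.sum_eq_zero
    rintro ⟨a,b⟩ hab
    have hab' : a + b = e := Finset.HasAntidiagonal.mem_antidiagonal.mp hab
    have hdeg : deg a + deg b = deg e := by rw [← deg_add, hab']
    by_cases ha : deg a = k
    · have hb : MvPowerSeries.coeff b (vanDet 4) = 0 := coeff_VV b (by omega)
      rw [hb, mul_zero]
    · rw [coeff_homog, if_neg ha, zero_mul]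

lemma schur_coeff (S : M4) (n : ℕ) (hs : S * vanDet 4 = AA n) (a : Fin 4 →₀ ℕ)
    (h : deg a ≠ 2*n) : coeff a S = 0 := by
  classical
  have h1 : homog (deg a) S * vanDet 4 = homog (deg a + 6) (AA n) := by
    rw [homog_mul_V, hs]
  have h2 : homog (deg a + 6) (AA n) = 0 := by
    ext e
    rw [coeff_homog, map_zero]
    split_ifs with hd
    · exact coeff_AA n e (by omega)
    · rfl
  have h3 : homog (deg a) S = 0 := by
    rcases mul_eq_zero.mp (h1.trans h2) with h' | h'
    · exact h'
    · exact absurd h' VV_ne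
  have h4 := congrArg (coeff a) h3
  rwa [coeff_homog, if_pos rfl, map_zero] at h4

end StmtTenAux

set_option maxHeartbeats 1000000 in
/-- In four variables,
`Σ_{n≥0} S_{(n,n)} = (1 - t₁t₂t₃t₄) / ∏_{1≤i<j≤4}(1 - t_i t_j)`; equivalently,
`(Σ_{n≥0} S_{(n,n)}) · ∏_{1≤i<j≤4}(1 - t_i t_j) = 1 - t₁t₂t₃t₄`. -/
theorem stmt10
    (SR : ℕ → MvPowerSeries (Fin 4) ℚ)
    (hSR : ∀ n : ℕ, IsSchur 4 (fun i => if (i : ℕ) < 2 then n else 0) (SR n))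
    (f : MvPowerSeries (Fin 4) ℚ)
    (hf : ∀ e : Fin 4 →₀ ℕ,
      MvPowerSeries.coeff e f = ∑ᶠ n : ℕ, MvPowerSeries.coeff e (SR n)) :
    f = (1 - MvPowerSeries.X 0 * MvPowerSeries.X 1 * MvPowerSeries.X 2 * MvPowerSeries.X 3) *
        (∏ p ∈ Finset.univ.filter fun p : Fin 4 × Fin 4 => p.1 < p.2,
          (1 - MvPowerSeries.X p.1 * MvPowerSeries.X p.2 : MvPowerSeries (Fin 4) ℚ))⁻¹ ∧
    f * ∏ p ∈ Finset.univ.filter fun p : Fin 4 × Fin 4 => p.1 < p.2,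
          (1 - MvPowerSeries.X p.1 * MvPowerSeries.X p.2 : MvPowerSeries (Fin 4) ℚ) =
      1 - MvPowerSeries.X 0 * MvPowerSeries.X 1 * MvPowerSeries.X 2 * MvPowerSeries.X 3 := by
  classical
  have hA : ∀ n : ℕ, SR n * vanDet 4 = AA n := fun n => hSR n
  have main : f * (vanDet 4 * PP) = EE * vanDet 4 := by
    ext e
    set N := deg e + 1 with hN
    have step1 : MvPowerSeries.coeff e (f * (vanDet 4 * PP)) =
        ∑ p ∈ Finset.HasAntidiagonal.antidiagonal e,
          (∑ n ∈ Finset.range N, MvPowerSeries.coeff p.1 (SR n)) *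
            MvPowerSeries.coeff p.2 (vanDet 4 * PP) := by
      rw [MvPowerSeries.coeff_mul]
      apply Finset.sum_congr rfl
      intro p hp
      congr 1
      rw [hf p.1]
      apply finsum_eq_sum_of_support_subset
      intro n hn
      simp only [Function.mem_support] at hn
      have h1 : deg p.1 = 2*n := by
        by_contra hcon
        exact hn (schur_coeff (SR n) n (hA n) p.1 hcon)
      have h2 : deg p.1 + deg p.2 = deg e := by
        rw [← deg_add, Finset.HasAntidiagonal.mem_antidiagonal.mp hp]
      simp only [Finset.coe_range, Set.mem_Iio]
      omega
    have step2 : ∀ n, ∑ p ∈ Finset.HasAntidiagonal.antidiagonal e,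
        MvPowerSeries.coeff p.1 (SR n) * MvPowerSeries.coeff p.2 (vanDet 4 * PP)
        = MvPowerSeries.coeff e (AA n * PP) := by
      intro n
      rw [← MvPowerSeries.coeff_mul, ← mul_assoc, hA n]
    calc MvPowerSeries.coeff e (f * (vanDet 4 * PP))
        = ∑ p ∈ Finset.HasAntidiagonal.antidiagonal e,
          (∑ n ∈ Finset.range N, MvPowerSeries.coeff p.1 (SR n)) *
            MvPowerSeries.coeff p.2 (vanDet 4 * PP) := step1
      _ = ∑ p ∈ Finset.HasAntidiagonal.antidiagonal e, ∑ n ∈ Finset.range N,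
            MvPowerSeries.coeff p.1 (SR n) * MvPowerSeries.coeff p.2 (vanDet 4 * PP) := by
            simp_rw [Finset.sum_mul]
      _ = ∑ n ∈ Finset.range N, ∑ p ∈ Finset.HasAntidiagonal.antidiagonal e,
            MvPowerSeries.coeff p.1 (SR n) * MvPowerSeries.coeff p.2 (vanDet 4 * PP) :=
            Finset.sum_comm
      _ = ∑ n ∈ Finset.range N, MvPowerSeries.coeff e (AA n * PP) := by
            simp_rw [step2]
      _ = MvPowerSeries.coeff e (∑ n ∈ Finset.range N, (AA n * PP)) := (map_sum _ _ _).symm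
      _ = MvPowerSeries.coeff e (B 0 - B N) := by rw [telescope]
      _ = MvPowerSeries.coeff e (B 0) - MvPowerSeries.coeff e (B N) := map_sub _ _ _
      _ = MvPowerSeries.coeff e (B 0) := by rw [coeff_B e N (by omega), sub_zero]
      _ = MvPowerSeries.coeff e (EE * vanDet 4) := by rw [T2]
  have key : f * PP = EE := by
    apply mul_right_cancel₀ VV_ne
    calc f * PP * vanDet 4 = f * (vanDet 4 * PP) := by ring
      _ = EE * vanDet 4 := main
  have hPc : MvPowerSeries.constantCoeff PP ≠ 0 := by
    rw [PP_eq]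
    simp
  constructor
  · have hinv : PP * PP⁻¹ = 1 := MvPowerSeries.mul_inv_cancel _ hPc
    calc f = f * (PP * PP⁻¹) := by rw [hinv, mul_one]
      _ = (f * PP) * PP⁻¹ := by ring
      _ = EE * PP⁻¹ := by rw [key]
  · exact key
end
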